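/- arXiv:2309.01304 — 2 statements merged into one kernel-verified Lean document; each statement's English description precedes it below -/
import Mathlib

section
/- If v ∈ H^{σ/2}(ℝ) satisfies K₁(v) < 0, then I₁(v) > d₁. -/
open MeasureTheory Real Filter Topology ComplexConjugate
open scoped FourierTransform

noncomputable section

/-- `w` is a representative of the Fourier–Plancherel transform of `u ∈ L²(ℝ)`,
characterized by duality against Schwartz functions. -/
def IsFourierRep (u : ℝ → ℝ) (w : ℝ → ℂ) : Prop :=
  MemLp w 2 (volume : Measure ℝ) ∧
    ∀ φ : SchwartzMap ℝ ℂ, ∫ ξ : ℝ, w ξ * φ ξ = ∫ x : ℝ, (u x : ℂ) * 𝓕 (⇑φ) x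

/-- A choice of the Fourier–Plancherel transform `û` of `u`. -/
def hatFT (u : ℝ → ℝ) : ℝ → ℂ :=
  haveI := Classical.propDecidable (∃ w, IsFourierRep u w)
  if h : ∃ w, IsFourierRep u w then h.choose else 0

/-- `‖D_x^{σ/2} u‖_{L²}² = ∫ |ξ|^σ |û(ξ)|² dξ`. -/
def fracSq (σ : ℝ) (u : ℝ → ℝ) : ℝ := ∫ ξ : ℝ, |ξ| ^ σ * ‖hatFT u ξ‖ ^ 2

/-- `u ∈ H^{σ/2}(ℝ)` : `u ∈ L²` and `∫ |ξ|^σ |û(ξ)|² dξ < ∞`. -/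
def MemHhalf (σ : ℝ) (u : ℝ → ℝ) : Prop :=
  MemLp u 2 (volume : Measure ℝ) ∧
    Integrable (fun ξ : ℝ => |ξ| ^ σ * ‖hatFT u ξ‖ ^ 2) volume

/-- `u ∈ H^{σ+1}(ℝ)` : `∫ (1+|ξ|²)^{σ+1} |û(ξ)|² dξ < ∞`. -/
def MemHsigmaPlusOne (σ : ℝ) (u : ℝ → ℝ) : Prop :=
  Integrable (fun ξ : ℝ => (1 + |ξ| ^ 2) ^ (σ + 1) * ‖hatFT u ξ‖ ^ 2) volume

/-- `u` is nontrivial (not a.e. zero). -/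
def Nontriv (u : ℝ → ℝ) : Prop := ¬ u =ᵐ[(volume : Measure ℝ)] (fun _ => (0 : ℝ))

/-- `u ∈ H^{σ/2}(ℝ)` is a weak solution of `D_x^σ u + c u - f (u) = 0` on `ℝ`. -/
def IsWeakSol (σ c : ℝ) (f : ℝ → ℝ) (u : ℝ → ℝ) : Prop :=
  MemHhalf σ u ∧
    ∀ φ : SchwartzMap ℝ ℂ,
      (∫ ξ : ℝ, ((|ξ| ^ σ : ℝ) : ℂ) * hatFT u ξ * conj (𝓕 (⇑φ) ξ))
        + (c : ℂ) * (∫ x : ℝ, (u x : ℂ) * φ x)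
        - (∫ x : ℝ, (f (u x) : ℂ) * φ x) = 0

/-- The functional `S₁`. -/
def S1 (σ c p q : ℝ) (u : ℝ → ℝ) : ℝ :=
  (1 / 2) * fracSq σ u + (c / 2) * (∫ x : ℝ, u x ^ 2)
    + (1 / (p + 1)) * (∫ x : ℝ, |u x| ^ (p + 1))
    - (1 / (q + 1)) * (∫ x : ℝ, |u x| ^ (q + 1))

/-- The Nehari functional `K₁`. -/
def K1 (σ c p q : ℝ) (u : ℝ → ℝ) : ℝ :=
  fracSq σ u + c * (∫ x : ℝ, u x ^ 2)
    + (∫ x : ℝ, |u x| ^ (p + 1)) - (∫ x : ℝ, |u x| ^ (q + 1))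

/-- The Nehari set `𝒦₁`. -/
def nehariSet (σ c p q : ℝ) : Set (ℝ → ℝ) :=
  {v | MemHhalf σ v ∧ Nontriv v ∧ K1 σ c p q v = 0}

/-- `d₁ = inf {S₁ v : v ∈ 𝒦₁}`. -/
def d1 (σ c p q : ℝ) : ℝ := sInf (S1 σ c p q '' nehariSet σ c p q)

/-- The functional `I₁`. -/
def I1 (σ c p q : ℝ) (u : ℝ → ℝ) : ℝ :=
  (1 / 2 - 1 / (q + 1)) * (fracSq σ u + c * (∫ x : ℝ, u x ^ 2))
    + (1 / (p + 1) - 1 / (q + 1)) * (∫ x : ℝ, |u x| ^ (p + 1))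



open scoped ContDiff in
/-- A smooth compactly supported real function, viewed as a complex-valued Schwartz map. -/
def schwartzOfCS (g : ℝ → ℝ) (hg : ContDiff ℝ ∞ g) (hs : HasCompactSupport g) :
    SchwartzMap ℝ ℂ where
  toFun x := (g x : ℂ)
  smooth' := Complex.ofRealCLM.contDiff.comp hg
  decay' := by
    intro k n
    set f : ℝ → ℂ := fun x => (g x : ℂ) with hf
    have hfc : ContDiff ℝ ∞ f := Complex.ofRealCLM.contDiff.comp hg
    have hfs : HasCompactSupport f := hs.comp_left (g := fun r : ℝ => (r : ℂ)) (by simp)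
    have h1 : HasCompactSupport (iteratedFDeriv ℝ n f) := hfs.iteratedFDeriv n
    have h2 : Continuous (fun x : ℝ => ‖x‖ ^ k * ‖iteratedFDeriv ℝ n f x‖) :=
      (continuous_norm.pow k).mul
        (hfc.continuous_iteratedFDeriv (by exact_mod_cast le_top)).norm
    have h3 : HasCompactSupport (fun x : ℝ => ‖x‖ ^ k * ‖iteratedFDeriv ℝ n f x‖) :=
      (h1.norm).mul_left
    obtain ⟨C, hC⟩ := h3.exists_bound_of_continuous h2
    refine ⟨C, fun x => (le_abs_self _).trans ?_⟩
    have := hC x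
    rwa [Real.norm_eq_abs] at this

lemma isFourierRep_unique {u : ℝ → ℝ} {w1 w2 : ℝ → ℂ}
    (h1 : IsFourierRep u w1) (h2 : IsFourierRep u w2) : w1 =ᵐ[(volume : Measure ℝ)] w2 := by
  have key : ∀ᵐ x ∂(volume : Measure ℝ), w1 x - w2 x = 0 := by
    apply ae_eq_zero_of_integral_contDiff_smul_eq_zero
      ((h1.1.sub h2.1).locallyIntegrable (by norm_num))
    intro g hg hgs
    have i1 : Integrable (fun x => g x • w1 x) volume :=
      (h1.1.locallyIntegrable (by norm_num)).integrable_smul_left_of_hasCompactSupport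
        hg.continuous hgs
    have i2 : Integrable (fun x => g x • w2 x) volume :=
      (h2.1.locallyIntegrable (by norm_num)).integrable_smul_left_of_hasCompactSupport
        hg.continuous hgs
    have hsp : (fun x => g x • (w1 x - w2 x)) = fun x => g x • w1 x - g x • w2 x := by
      funext x; rw [smul_sub]
    set φ := schwartzOfCS g hg hgs with hφ
    have e1 : ∫ x, g x • w1 x = ∫ x : ℝ, (u x : ℂ) * 𝓕 (⇑φ) x := by
      rw [← h1.2 φ]; congr 1; funext x
      show g x • w1 x = w1 x * (g x : ℂ)
      rw [Complex.real_smul]; ring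
    have e2 : ∫ x, g x • w2 x = ∫ x : ℝ, (u x : ℂ) * 𝓕 (⇑φ) x := by
      rw [← h2.2 φ]; congr 1; funext x
      show g x • w2 x = w2 x * (g x : ℂ)
      rw [Complex.real_smul]; ring
    show (∫ x, g x • (w1 x - w2 x)) = 0
    rw [hsp, integral_sub i1 i2, e1, e2, sub_self]
  filter_upwards [key] with x hx
  exact sub_eq_zero.1 hx

lemma hatFT_spec {u : ℝ → ℝ} (h : ∃ w, IsFourierRep u w) : IsFourierRep u (hatFT u) := by
  unfold hatFT
  rw [dif_pos h]
  exact h.choose_spec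

lemma hatFT_not {u : ℝ → ℝ} (h : ¬∃ w, IsFourierRep u w) : hatFT u = 0 := by
  unfold hatFT
  rw [dif_neg h]

lemma isFourierRep_const_mul {u : ℝ → ℝ} {w : ℝ → ℂ} (h : IsFourierRep u w) (t : ℝ) :
    IsFourierRep (fun x => t * u x) (fun ξ => (t : ℂ) * w ξ) := by
  refine ⟨h.1.const_mul _, fun φ => ?_⟩
  have h2 := h.2 φ
  calc ∫ ξ : ℝ, ((t : ℂ) * w ξ) * φ ξ
      = (t : ℂ) * ∫ ξ : ℝ, w ξ * φ ξ := by
        rw [← integral_const_mul]; congr 1; funext ξ; ring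
    _ = (t : ℂ) * ∫ x : ℝ, (u x : ℂ) * 𝓕 (⇑φ) x := by rw [h2]
    _ = ∫ x : ℝ, ((t * u x : ℝ) : ℂ) * 𝓕 (⇑φ) x := by
        rw [← integral_const_mul]; congr 1; funext x; push_cast; ring

lemma hatFT_const_mul (u : ℝ → ℝ) {t : ℝ} (ht : t ≠ 0) :
    hatFT (fun x => t * u x) =ᵐ[(volume : Measure ℝ)] fun ξ => (t : ℂ) * hatFT u ξ := by
  by_cases h : ∃ w, IsFourierRep u w
  · have h1 := hatFT_spec h
    have hrep := isFourierRep_const_mul h1 t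
    exact isFourierRep_unique (hatFT_spec ⟨_, hrep⟩) hrep
  · have h2 : ¬∃ w, IsFourierRep (fun x => t * u x) w := by
      rintro ⟨w, hw⟩
      apply h
      have e := isFourierRep_const_mul hw t⁻¹
      simp only [inv_mul_cancel_left₀ ht] at e
      exact ⟨_, e⟩
    rw [hatFT_not h, hatFT_not h2]
    filter_upwards with ξ
    simp

lemma hatFT_sq_ae {σ' : ℝ} {u : ℝ → ℝ} {t : ℝ} (ht : t ≠ 0) :
    (fun ξ => |ξ| ^ σ' * ‖hatFT (fun x => t * u x) ξ‖ ^ 2 : ℝ → ℝ) =ᵐ[(volume : Measure ℝ)]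
      (fun ξ => t ^ 2 * (|ξ| ^ σ' * ‖hatFT u ξ‖ ^ 2)) := by
  filter_upwards [hatFT_const_mul u ht] with ξ hξ
  rw [hξ, norm_mul, Complex.norm_real, Real.norm_eq_abs, mul_pow, sq_abs]
  ring

lemma fracSq_const_mul (σ' : ℝ) (u : ℝ → ℝ) {t : ℝ} (ht : t ≠ 0) :
    fracSq σ' (fun x => t * u x) = t ^ 2 * fracSq σ' u := by
  unfold fracSq
  rw [← integral_const_mul]
  exact integral_congr_ae (hatFT_sq_ae (σ' := σ') ht)

lemma memHhalf_const_mul {σ' : ℝ} {u : ℝ → ℝ} (hu : MemHhalf σ' u) {t : ℝ} (ht : t ≠ 0) :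
    MemHhalf σ' (fun x => t * u x) :=
  ⟨hu.1.const_mul t, (hu.2.const_mul (t ^ 2)).congr (hatFT_sq_ae (σ' := σ') ht).symm⟩

lemma integral_abs_rpow_const_mul (u : ℝ → ℝ) {t : ℝ} (ht : 0 < t) (r : ℝ) :
    (∫ x : ℝ, |t * u x| ^ r) = t ^ r * ∫ x : ℝ, |u x| ^ r := by
  rw [← integral_const_mul]
  congr 1; funext x
  rw [abs_mul, Real.mul_rpow (abs_nonneg _) (abs_nonneg _), abs_of_pos ht]

lemma integral_sq_const_mul (u : ℝ → ℝ) (t : ℝ) :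
    (∫ x : ℝ, (t * u x) ^ 2) = t ^ 2 * ∫ x : ℝ, u x ^ 2 := by
  rw [← integral_const_mul]
  congr 1; funext x; ring

lemma fracSq_nonneg (σ' : ℝ) (u : ℝ → ℝ) : 0 ≤ fracSq σ' u :=
  integral_nonneg fun ξ => mul_nonneg (Real.rpow_nonneg (abs_nonneg _) _) (sq_nonneg _)

lemma integral_abs_rpow_nonneg (u : ℝ → ℝ) (r : ℝ) : 0 ≤ ∫ x : ℝ, |u x| ^ r :=
  integral_nonneg fun x => Real.rpow_nonneg (abs_nonneg _) _

lemma integral_sq_nonneg (u : ℝ → ℝ) : 0 ≤ ∫ x : ℝ, u x ^ 2 :=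
  integral_nonneg fun x => sq_nonneg _

lemma S1_eq_I1_add (σ' c p q : ℝ) (u : ℝ → ℝ) (hp1 : p + 1 ≠ 0) (hq1 : q + 1 ≠ 0) :
    S1 σ' c p q u = I1 σ' c p q u + (1 / (q + 1)) * K1 σ' c p q u := by
  unfold S1 I1 K1
  field_simp
  ring

lemma I1_nonneg {σ' c p q : ℝ} (hc : 0 ≤ c) (hq : 1 ≤ q) (hp : 0 < p + 1) (hpq : p ≤ q)
    (u : ℝ → ℝ) : 0 ≤ I1 σ' c p q u := by
  have hq1 : (0:ℝ) < q + 1 := by linarith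
  have h1 : (0:ℝ) ≤ 1 / 2 - 1 / (q + 1) := by
    rw [sub_nonneg, div_le_div_iff₀ hq1 (by norm_num)]
    linarith
  have h2 : (0:ℝ) ≤ 1 / (p + 1) - 1 / (q + 1) := by
    rw [sub_nonneg, div_le_div_iff₀ hq1 hp]
    linarith
  exact add_nonneg
    (mul_nonneg h1 (add_nonneg (fracSq_nonneg σ' u) (mul_nonneg hc (integral_sq_nonneg u))))
    (mul_nonneg h2 (integral_abs_rpow_nonneg u _))

lemma nontriv_of_K1_neg {σ' c p q : ℝ} {v : ℝ → ℝ}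
    (hp1 : 0 < p + 1) (hq1 : 0 < q + 1) (hK : K1 σ' c p q v < 0) : Nontriv v := by
  intro hz
  have hrep0 : IsFourierRep v 0 := by
    constructor
    · exact MemLp.zero
    · intro φ
      have hae : ∀ᵐ x ∂(volume : Measure ℝ), (v x : ℂ) * 𝓕 (⇑φ) x = 0 := by
        filter_upwards [hz] with x hx
        rw [hx]; simp
      rw [integral_eq_zero_of_ae hae]
      simp
  have hft : hatFT v =ᵐ[(volume : Measure ℝ)] 0 :=
    isFourierRep_unique (hatFT_spec ⟨0, hrep0⟩) hrep0
  have e0 : fracSq σ' v = 0 := by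
    unfold fracSq
    apply integral_eq_zero_of_ae
    filter_upwards [hft] with ξ hξ
    rw [hξ]; simp
  have e1 : (∫ x : ℝ, v x ^ 2) = 0 := by
    apply integral_eq_zero_of_ae
    filter_upwards [hz] with x hx
    simp [hx]
  have e2 : (∫ x : ℝ, |v x| ^ (p + 1)) = 0 := by
    apply integral_eq_zero_of_ae
    filter_upwards [hz] with x hx
    simp [hx, Real.zero_rpow (ne_of_gt hp1)]
  have e3 : (∫ x : ℝ, |v x| ^ (q + 1)) = 0 := by
    apply integral_eq_zero_of_ae
    filter_upwards [hz] with x hx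
    simp [hx, Real.zero_rpow (ne_of_gt hq1)]
  unfold K1 at hK
  rw [e0, e1, e2, e3] at hK
  simp at hK

lemma integral_sq_pos {v : ℝ → ℝ} (h2 : MemLp v 2 (volume : Measure ℝ)) (hnt : Nontriv v) :
    0 < ∫ x : ℝ, v x ^ 2 := by
  have hi : Integrable (fun x => v x ^ 2) volume := by
    have h := h2.integrable_norm_rpow (by norm_num) (by norm_num)
    refine h.congr (Filter.Eventually.of_forall fun x => ?_)
    show ‖v x‖ ^ ENNReal.toReal 2 = v x ^ 2
    have h22 : ENNReal.toReal 2 = ((2:ℕ):ℝ) := by norm_num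
    rw [h22, Real.rpow_natCast, Real.norm_eq_abs, sq_abs]
  rcases (integral_sq_nonneg v).lt_or_eq with h | h
  · exact h
  · exfalso
    apply hnt
    have hz := (integral_eq_zero_iff_of_nonneg (fun x => sq_nonneg (v x)) hi).1 h.symm
    filter_upwards [hz] with x hx
    exact pow_eq_zero_iff two_ne_zero |>.1 hx


theorem I1_gt_d1_of_K1_neg
    (σ c p q : ℝ) (hσ0 : 0 < σ) (hσ2 : σ < 2) (hc : 0 < c)
    (hp : 1 < p) (hpq : p < q) (hq : σ < 1 → q < 2 / (1 - σ) - 1)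
    (v : ℝ → ℝ) (hv : MemHhalf σ v) (hK : K1 σ c p q v < 0) :
    d1 σ c p q < I1 σ c p q v := by
  have hq1 : (1:ℝ) < q := lt_trans hp hpq
  have hp1 : (0:ℝ) < p + 1 := by linarith
  have hq1' : (0:ℝ) < q + 1 := by linarith
  have hnt : Nontriv v := nontriv_of_K1_neg hp1 hq1' hK
  set A : ℝ := fracSq σ v + c * ∫ x : ℝ, v x ^ 2 with hA
  set B : ℝ := ∫ x : ℝ, |v x| ^ (p + 1) with hB
  set C : ℝ := ∫ x : ℝ, |v x| ^ (q + 1) with hC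
  have hApos : 0 < A :=
    add_pos_of_nonneg_of_pos (fracSq_nonneg σ v) (mul_pos hc (integral_sq_pos hv.1 hnt))
  have hBnn : 0 ≤ B := integral_abs_rpow_nonneg v _
  -- the auxiliary function for the intermediate value theorem
  set φ : ℝ → ℝ := fun t => A + t ^ (p - 1) * B - t ^ (q - 1) * C with hφ
  have hφ0 : φ 0 = A := by
    simp only [hφ]
    rw [Real.zero_rpow (by linarith : p - 1 ≠ 0), Real.zero_rpow (by linarith : q - 1 ≠ 0)]
    ring
  have hφ1 : φ 1 = A + B - C := by simp [hφ]
  have hφ1neg : φ 1 < 0 := by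
    rw [hφ1]
    have hKv : K1 σ c p q v = A + B - C := by unfold K1; rw [hA, hB, hC]
    rw [hKv] at hK
    linarith
  have hcont : ContinuousOn φ (Set.Icc (0:ℝ) 1) := by
    have c1 : ContinuousOn (fun t : ℝ => t ^ (p - 1)) (Set.Icc (0:ℝ) 1) := fun x _ =>
      (Real.continuousAt_rpow_const x (p - 1) (Or.inr (by linarith))).continuousWithinAt
    have c2 : ContinuousOn (fun t : ℝ => t ^ (q - 1)) (Set.Icc (0:ℝ) 1) := fun x _ =>
      (Real.continuousAt_rpow_const x (q - 1) (Or.inr (by linarith))).continuousWithinAt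
    exact (continuousOn_const.add (c1.mul continuousOn_const)).sub (c2.mul continuousOn_const)
  have hmem : (0:ℝ) ∈ Set.Ioo (φ 1) (φ 0) := by
    constructor
    · exact hφ1neg
    · rw [hφ0]; exact hApos
  obtain ⟨t, htI, htφ⟩ := intermediate_value_Ioo' (by norm_num : (0:ℝ) ≤ 1) hcont hmem
  have ht0 : 0 < t := htI.1
  have ht1 : t < 1 := htI.2
  have htne : t ≠ 0 := ne_of_gt ht0
  -- the scaled function
  set w : ℝ → ℝ := fun x => t * v x with hw
  have hfw : fracSq σ w = t ^ 2 * fracSq σ v := fracSq_const_mul σ v htne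
  have hsw : (∫ x : ℝ, w x ^ 2) = t ^ 2 * ∫ x : ℝ, v x ^ 2 := integral_sq_const_mul v t
  have hpw : (∫ x : ℝ, |w x| ^ (p + 1)) = t ^ (p + 1) * B := integral_abs_rpow_const_mul v ht0 _
  have hqw : (∫ x : ℝ, |w x| ^ (q + 1)) = t ^ (q + 1) * C := integral_abs_rpow_const_mul v ht0 _
  have ht2 : t ^ (2:ℕ) = t ^ ((2:ℕ):ℝ) := (Real.rpow_natCast t 2).symm
  have hexp_p : t ^ (p + 1) = t ^ 2 * t ^ (p - 1) := by
    rw [ht2, ← Real.rpow_add ht0]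
    congr 1
    push_cast
    ring
  have hexp_q : t ^ (q + 1) = t ^ 2 * t ^ (q - 1) := by
    rw [ht2, ← Real.rpow_add ht0]
    congr 1
    push_cast
    ring
  have hK1w : K1 σ c p q w = 0 := by
    unfold K1
    rw [hfw, hsw, hpw, hqw, hexp_p, hexp_q]
    have : t ^ 2 * fracSq σ v + c * (t ^ 2 * ∫ x : ℝ, v x ^ 2) + t ^ 2 * t ^ (p - 1) * B
        - t ^ 2 * t ^ (q - 1) * C = t ^ 2 * φ t := by
      simp only [hφ]; ring
    rw [this, htφ, mul_zero]
  have hwmem : w ∈ nehariSet σ c p q := by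
    refine ⟨memHhalf_const_mul hv htne, ?_, hK1w⟩
    intro hz
    apply hnt
    filter_upwards [hz] with x hx
    have : t * v x = 0 := hx
    rcases mul_eq_zero.1 this with h | h
    · exact absurd h htne
    · exact h
  have hbdd : BddBelow (S1 σ c p q '' nehariSet σ c p q) := by
    refine ⟨0, ?_⟩
    rintro y ⟨u, hu, rfl⟩
    rw [S1_eq_I1_add σ c p q u (ne_of_gt hp1) (ne_of_gt hq1'), hu.2.2, mul_zero, add_zero]
    exact I1_nonneg (le_of_lt hc) (le_of_lt hq1) hp1 (le_of_lt hpq) u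
  have hd1 : d1 σ c p q ≤ S1 σ c p q w :=
    csInf_le hbdd (Set.mem_image_of_mem _ hwmem)
  have hS1w : S1 σ c p q w = I1 σ c p q w := by
    rw [S1_eq_I1_add σ c p q w (ne_of_gt hp1) (ne_of_gt hq1'), hK1w, mul_zero, add_zero]
  have hI1lt : I1 σ c p q w < I1 σ c p q v := by
    unfold I1
    rw [hfw, hsw, hpw]
    have hc1 : (0:ℝ) < 1 / 2 - 1 / (q + 1) := by
      rw [sub_pos, div_lt_div_iff₀ hq1' (by norm_num)]
      linarith
    have hc2 : (0:ℝ) ≤ 1 / (p + 1) - 1 / (q + 1) := by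
      rw [sub_nonneg, div_le_div_iff₀ hq1' hp1]
      linarith
    have ht2lt : t ^ 2 < 1 := by nlinarith
    have htplt : t ^ (p + 1) ≤ 1 :=
      le_of_lt (Real.rpow_lt_one (le_of_lt ht0) ht1 (by linarith))
    have harr : t ^ 2 * fracSq σ v + c * (t ^ 2 * ∫ x : ℝ, v x ^ 2) = t ^ 2 * A := by
      rw [hA]; ring
    rw [harr]
    have h1 : (1 / 2 - 1 / (q + 1)) * (t ^ 2 * A) < (1 / 2 - 1 / (q + 1)) * A := by
      apply mul_lt_mul_of_pos_left _ hc1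
      calc t ^ 2 * A < 1 * A := mul_lt_mul_of_pos_right ht2lt hApos
        _ = A := one_mul A
    have h2 : (1 / (p + 1) - 1 / (q + 1)) * (t ^ (p + 1) * B)
        ≤ (1 / (p + 1) - 1 / (q + 1)) * B := by
      apply mul_le_mul_of_nonneg_left _ hc2
      calc t ^ (p + 1) * B ≤ 1 * B := mul_le_mul_of_nonneg_right htplt hBnn
        _ = B := one_mul B
    calc (1 / 2 - 1 / (q + 1)) * (t ^ 2 * A) + (1 / (p + 1) - 1 / (q + 1)) * (t ^ (p + 1) * B)
        < (1 / 2 - 1 / (q + 1)) * A + (1 / (p + 1) - 1 / (q + 1)) * B := by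
          exact add_lt_add_of_lt_of_le h1 h2
      _ = (1 / 2 - 1 / (q + 1)) * (fracSq σ v + c * ∫ x : ℝ, v x ^ 2)
            + (1 / (p + 1) - 1 / (q + 1)) * ∫ x : ℝ, |v x| ^ (p + 1) := by
          rw [hA, hB]
  calc d1 σ c p q ≤ S1 σ c p q w := hd1
    _ = I1 σ c p q w := hS1w
    _ < I1 σ c p q v := hI1lt
end
end

section
/- Let 0 < σ ≤ 1 and 0 < c < c₀. Then the Pohozaev constraint set 𝒫_c is nonempty: if σ = 1 there exists v ∈ H^{1/2}(ℝ), v ≠ 0, with P_c(v) = 0, and if 0 < σ < 1 there exists v ∈ H^{σ/2}(ℝ), v ≠ 0, with P_c(v) = 1. -/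
open MeasureTheory Real Filter Topology ComplexConjugate
open scoped FourierTransform

noncomputable section

/-- The Pohozaev functional `P_c`. -/
def Pc (c p q : ℝ) (u : ℝ → ℝ) : ℝ :=
  -(c / 2) * (∫ x : ℝ, u x ^ 2) + (1 / (p + 1)) * (∫ x : ℝ, |u x| ^ (p + 1))
    - (1 / (q + 1)) * (∫ x : ℝ, |u x| ^ (q + 1))


/-- Compactly supported smooth functions are Schwartz. -/
def toSchwartz (f : ℝ → ℂ) (hf : ContDiff ℝ ((⊤ : ℕ∞) : WithTop ℕ∞) f)
    (hs : HasCompactSupport f) : SchwartzMap ℝ ℂ where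
  toFun := f
  smooth' := hf
  decay' := by
    intro k n
    have h2 : HasCompactSupport (iteratedFDeriv ℝ n f) := hs.iteratedFDeriv n
    have hc : Continuous fun x => iteratedFDeriv ℝ n f x :=
      hf.continuous_iteratedFDeriv (mod_cast le_top)
    have h3 : HasCompactSupport fun x : ℝ => ‖x‖ ^ k * ‖iteratedFDeriv ℝ n f x‖ := by
      apply HasCompactSupport.mul_left
      exact h2.norm
    have h4 : Continuous fun x : ℝ => ‖x‖ ^ k * ‖iteratedFDeriv ℝ n f x‖ :=
      ((continuous_norm.comp continuous_id).pow k).mul hc.norm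
    obtain ⟨C, hC⟩ := h4.bounded_above_of_compact_support h3
    exact ⟨C, fun x => (le_abs_self _).trans ((Real.norm_eq_abs _ ▸ hC x))⟩

@[simp] lemma toSchwartz_coe (f : ℝ → ℂ) (hf hs) : ⇑(toSchwartz f hf hs) = f := rfl

/-- The multiplication formula for the Fourier transform. -/
lemma mult_formula {f g : ℝ → ℂ} (hf : Integrable f) (hg : Integrable g) :
    ∫ ξ : ℝ, 𝓕 f ξ * g ξ = ∫ x : ℝ, f x * 𝓕 g x := by
  have hflip : (innerₗ ℝ).flip = innerₗ ℝ := by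
    apply LinearMap.ext; intro x; apply LinearMap.ext; intro y
    simpa using mul_comm y x
  have hL : Continuous fun p : ℝ × ℝ => (innerₗ ℝ) p.1 p.2 := by
    simpa using (continuous_inner : Continuous fun p : ℝ × ℝ => inner ℝ p.1 p.2)
  have := VectorFourier.integral_bilin_fourierIntegral_eq_flip
    (E := ℂ) (F := ℂ) (G := ℂ) (μ := (volume : Measure ℝ)) (ν := (volume : Measure ℝ))
    (L := innerₗ ℝ) (ContinuousLinearMap.mul ℂ ℂ) Real.continuous_fourierChar hL hf hg
  rw [hflip] at this
  simp [ContinuousLinearMap.mul_apply'] at this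
  exact this

/-- Weighted square-integrability for Schwartz functions. -/
lemma schwartz_weighted_integrable (σ : ℝ) (hσ0 : 0 < σ) (hσ1 : σ ≤ 1) (ψ : SchwartzMap ℝ ℂ) :
    Integrable (fun ξ : ℝ => |ξ| ^ σ * ‖ψ ξ‖ ^ 2) volume := by
  obtain ⟨C₀, hC₀pos, hC₀⟩ := ψ.decay 0 0
  obtain ⟨C₂, hC₂pos, hC₂⟩ := ψ.decay 2 0
  simp only [pow_zero, one_mul, norm_iteratedFDeriv_zero] at hC₀ hC₂
  apply (ψ.integrable.norm.const_mul (C₀ + C₂)).mono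
  · apply Continuous.aestronglyMeasurable
    have h1 : Continuous fun ξ : ℝ => |ξ| ^ σ := by
      apply Continuous.rpow_const (continuous_abs)
      intro x; right; exact hσ0.le
    exact h1.mul ((ψ.continuous.norm).pow 2)
  · filter_upwards with ξ
    have hw : ‖ψ ξ‖ ≥ 0 := norm_nonneg _
    have hbound : |ξ| ^ σ ≤ 1 + |ξ| ^ 2 := by
      rcases le_or_gt |ξ| 1 with h | h
      · have : |ξ| ^ σ ≤ 1 := Real.rpow_le_one (abs_nonneg _) h hσ0.le
        nlinarith [sq_nonneg ξ, sq_abs ξ]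
      · have h1 : |ξ| ^ σ ≤ |ξ| ^ (1 : ℝ) :=
          Real.rpow_le_rpow_of_exponent_le h.le hσ1
        rw [Real.rpow_one] at h1
        nlinarith [sq_abs ξ, abs_nonneg ξ]
    have hnn : 0 ≤ |ξ| ^ σ := Real.rpow_nonneg (abs_nonneg _) σ
    rw [Real.norm_eq_abs, abs_of_nonneg (by positivity), Real.norm_eq_abs,
      abs_of_nonneg (by positivity : (0:ℝ) ≤ (C₀ + C₂) * ‖ψ ξ‖)]
    calc |ξ| ^ σ * ‖ψ ξ‖ ^ 2 ≤ (1 + |ξ| ^ 2) * ‖ψ ξ‖ ^ 2 := by nlinarith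
    _ = ‖ψ ξ‖ * ‖ψ ξ‖ + (|ξ| ^ 2 * ‖ψ ξ‖) * ‖ψ ξ‖ := by ring
    _ ≤ C₀ * ‖ψ ξ‖ + C₂ * ‖ψ ξ‖ := by
        have e2 : |ξ| ^ 2 * ‖ψ ξ‖ ≤ C₂ := by simpa [Real.norm_eq_abs] using hC₂ ξ
        have e0 : ‖ψ ξ‖ ≤ C₀ := by simpa using hC₀ ξ
        nlinarith
    _ = (C₀ + C₂) * ‖ψ ξ‖ := by ring

lemma schwartz_memℒp_two (ψ : SchwartzMap ℝ ℂ) : MemLp (⇑ψ) 2 (volume : Measure ℝ) := by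
  rw [memLp_two_iff_integrable_sq_norm ψ.continuous.aestronglyMeasurable]
  obtain ⟨C₀, hC₀pos, hC₀⟩ := ψ.decay 0 0
  simp only [pow_zero, one_mul, norm_iteratedFDeriv_zero] at hC₀
  apply (ψ.integrable.norm.const_mul C₀).mono
  · exact ((ψ.continuous.norm).pow 2).aestronglyMeasurable
  · filter_upwards with ξ
    have e0 : ‖ψ ξ‖ ≤ C₀ := by simpa using hC₀ ξ
    rw [Real.norm_eq_abs, abs_of_nonneg (by positivity),
      Real.norm_eq_abs, abs_of_nonneg (by positivity : (0:ℝ) ≤ C₀ * ‖ψ ξ‖)]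
    nlinarith [norm_nonneg (ψ ξ)]

/-- A smooth compactly supported real function is in `H^{σ/2}`. -/
lemma memHhalf_of_smooth_compact (σ : ℝ) (hσ0 : 0 < σ) (hσ1 : σ ≤ 1) (u : ℝ → ℝ)
    (hu : ContDiff ℝ ((⊤ : ℕ∞) : WithTop ℕ∞) u) (hs : HasCompactSupport u) :
    MemHhalf σ u := by
  have hucd : ContDiff ℝ ((⊤ : ℕ∞) : WithTop ℕ∞) (fun x : ℝ => (u x : ℂ)) :=
    Complex.ofRealCLM.contDiff.comp hu
  have hucs : HasCompactSupport (fun x : ℝ => (u x : ℂ)) :=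
    hs.comp_left (g := fun r : ℝ => (r : ℂ)) Complex.ofReal_zero
  set φu : SchwartzMap ℝ ℂ := toSchwartz _ hucd hucs with hφu
  set ψ : SchwartzMap ℝ ℂ := SchwartzMap.fourierTransformCLM ℂ φu with hψ
  have hψeq : ⇑ψ = 𝓕 (fun x : ℝ => (u x : ℂ)) := by
    rw [hψ, SchwartzMap.fourierTransformCLM_apply]; rfl
  have hrep : IsFourierRep u ⇑ψ := by
    constructor
    · exact schwartz_memℒp_two ψ
    · intro φ
      rw [hψeq]
      exact mult_formula φu.integrable φ.integrable
  have hex : ∃ w, IsFourierRep u w := ⟨⇑ψ, hrep⟩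
  have hhat : IsFourierRep u (hatFT u) := by
    rw [hatFT, dif_pos hex]
    exact hex.choose_spec
  have hae : hatFT u =ᵐ[(volume : Measure ℝ)] ⇑ψ := by
    apply ae_eq_of_integral_contDiff_smul_eq
      (hhat.1.locallyIntegrable one_le_two) (hrep.1.locallyIntegrable one_le_two)
    intro g hg hgs
    have hgcd : ContDiff ℝ ((⊤ : ℕ∞) : WithTop ℕ∞) (fun x : ℝ => (g x : ℂ)) :=
      Complex.ofRealCLM.contDiff.comp hg
    have hgcs : HasCompactSupport (fun x : ℝ => (g x : ℂ)) :=
      hgs.comp_left (g := fun r : ℝ => (r : ℂ)) Complex.ofReal_zero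
    set φg : SchwartzMap ℝ ℂ := toSchwartz _ hgcd hgcs with hφg
    have h1 := hhat.2 φg
    have h2 := hrep.2 φg
    calc ∫ x : ℝ, g x • hatFT u x = ∫ ξ : ℝ, hatFT u ξ * φg ξ := by
          congr 1; funext x
          simp [hφg, toSchwartz_coe, Complex.real_smul, mul_comm]
    _ = ∫ ξ : ℝ, ψ ξ * φg ξ := by rw [h1, ← h2]
    _ = ∫ x : ℝ, g x • ψ x := by
          congr 1; funext x
          simp [hφg, toSchwartz_coe, Complex.real_smul, mul_comm]
  constructor
  · exact (hu.continuous.memLp_of_hasCompactSupport (μ := volume) hs : MemLp u 2 _)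
  · apply (schwartz_weighted_integrable σ hσ0 hσ1 ψ).congr
    filter_upwards [hae] with ξ hξ
    rw [hξ]

/-- Integral bounds for plateau functions. -/
lemma plateau_bounds {L : ℝ} (hL : 0 < L) {g : ℝ → ℝ} (hg : Continuous g)
    (h0 : ∀ x, 0 ≤ g x) (h1 : ∀ x, g x ≤ 1)
    (hplat : ∀ x ∈ Set.Icc (-L) L, g x = 1)
    (hsupp : ∀ x, x ∉ Set.Icc (-(L+1)) (L+1) → g x = 0) :
    Integrable g volume ∧ 2*L ≤ ∫ x, g x ∧ ∫ x, g x ≤ 2*(L+1) := by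
  have hcs : HasCompactSupport g := HasCompactSupport.intro isCompact_Icc hsupp
  have hint : Integrable g volume := hg.integrable_of_hasCompactSupport hcs
  refine ⟨hint, ?_, ?_⟩
  · have h1' : ∫ x in Set.Icc (-L) L, g x = 2*L := by
      rw [setIntegral_congr_fun measurableSet_Icc hplat]
      simp [Real.volume_Icc]
      rw [max_eq_left (by linarith)]
      ring
    have h2' : ∫ x in Set.Icc (-L) L, g x ≤ ∫ x, g x :=
      setIntegral_le_integral hint (Filter.Eventually.of_forall h0)
    linarith
  · have h1' : ∫ x, g x = ∫ x in Set.Icc (-(L+1)) (L+1), g x :=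
      (setIntegral_eq_integral_of_forall_compl_eq_zero (fun x hx => hsupp x hx)).symm
    have h2' : ∫ x in Set.Icc (-(L+1)) (L+1), g x ≤ ∫ x in Set.Icc (-(L+1)) (L+1), (1:ℝ) := by
      apply setIntegral_mono_on hint.integrableOn (integrableOn_const (hs := by simp [Real.volume_Icc]))
        measurableSet_Icc (fun x _ => h1 x)
    have h3' : ∫ x in Set.Icc (-(L+1)) (L+1), (1:ℝ) = 2*(L+1) := by
      simp [Real.volume_Icc]
      rw [max_eq_left (by linarith)]
      ring
    linarith

/-- The bump profile. -/
def bumpL {L : ℝ} (hL : 0 < L) : ContDiffBump (0 : ℝ) := ⟨L, L+1, hL, by linarith⟩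

lemma bumpL_plat {L : ℝ} (hL : 0 < L) {x : ℝ} (hx : x ∈ Set.Icc (-L) L) : bumpL hL x = 1 := by
  apply ContDiffBump.one_of_mem_closedBall
  simpa [Real.closedBall_eq_Icc, bumpL] using hx

lemma bumpL_supp {L : ℝ} (hL : 0 < L) {x : ℝ} (hx : x ∉ Set.Icc (-(L+1)) (L+1)) :
    bumpL hL x = 0 := by
  apply ContDiffBump.zero_of_le_dist
  simp only [Real.dist_eq, sub_zero, bumpL]
  simp only [Set.mem_Icc, not_and_or, not_le] at hx
  rcases hx with h | h
  · rw [abs_of_neg (by linarith)]; linarith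
  · rw [abs_of_pos (by linarith)]; linarith

lemma bumpL_rpow_bounds {L : ℝ} (hL : 0 < L) (r : ℝ) (hr : 0 < r) :
    Integrable (fun x => bumpL hL x ^ r) volume ∧
      2*L ≤ (∫ x, bumpL hL x ^ r) ∧ (∫ x, bumpL hL x ^ r) ≤ 2*(L+1) := by
  apply plateau_bounds hL
  · exact (bumpL hL).continuous.rpow_const (fun x => Or.inr hr.le)
  · exact fun x => Real.rpow_nonneg ((bumpL hL).nonneg' x) r
  · exact fun x => Real.rpow_le_one ((bumpL hL).nonneg' x) ((bumpL hL).le_one) hr.le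
  · intro x hx; rw [bumpL_plat hL hx, Real.one_rpow]
  · intro x hx; rw [bumpL_supp hL hx, Real.zero_rpow hr.ne']

lemma bumpL_sq_bounds {L : ℝ} (hL : 0 < L) :
    Integrable (fun x => bumpL hL x ^ 2) volume ∧
      2*L ≤ (∫ x, bumpL hL x ^ 2) ∧ (∫ x, bumpL hL x ^ 2) ≤ 2*(L+1) := by
  apply plateau_bounds hL
  · exact (bumpL hL).continuous.pow 2
  · exact fun x => sq_nonneg _
  · exact fun x => pow_le_one₀ ((bumpL hL).nonneg' x) ((bumpL hL).le_one)
  · intro x hx; rw [bumpL_plat hL hx, one_pow]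
  · intro x hx; rw [bumpL_supp hL hx]; ring

/-- Existence of a point with positive unit-length gain below the threshold. -/
lemma exists_pos_gain (p q c : ℝ) (hp : 1 < p) (hpq : p < q)
    (hcc : c < 2 * (q - p) * (p - 1) ^ ((p - 1) / (q - p)) * (q + 1) ^ ((p - 1) / (q - p)) /
      ((p + 1) ^ ((q - 1) / (q - p)) * (q - 1) ^ ((q - 1) / (q - p)))) :
    ∃ a : ℝ, 0 < a ∧ 0 < -(c/2) * a ^ 2 + a ^ (p+1) / (p+1) - a ^ (q+1) / (q+1) := by
  have hqp : 0 < q - p := by linarith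
  have hp1 : 0 < p - 1 := by linarith
  have hq1 : 0 < q - 1 := by linarith
  have hpp : 0 < p + 1 := by linarith
  have hqq : 0 < q + 1 := by linarith
  set β := (p - 1) / (q - p) with hβ
  set α := (q - 1) / (q - p) with hα
  have hαβ : α = β + 1 := by
    rw [hα, hβ]; field_simp; ring
  set t : ℝ := (p - 1) * (q + 1) / ((p + 1) * (q - 1)) with htdef
  have ht : 0 < t := by positivity
  set a : ℝ := t ^ (1 / (q - p)) with hadef
  have ha : 0 < a := Real.rpow_pos_of_pos ht _
  have h1 : a ^ (p - 1) = t ^ β := by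
    rw [hadef, ← Real.rpow_mul ht.le, hβ]
    congr 1; field_simp
  have h2 : a ^ (q - 1) = t ^ α := by
    rw [hadef, ← Real.rpow_mul ht.le, hα]
    congr 1; field_simp
  have htα : t ^ α = t ^ β * t := by
    rw [hαβ, Real.rpow_add ht, Real.rpow_one]
  have htβpos : 0 < t ^ β := Real.rpow_pos_of_pos ht _
  have hc0 : 2 * (q - p) * (p - 1) ^ β * (q + 1) ^ β /
      ((p + 1) ^ α * (q - 1) ^ α) = 2 * t ^ β * (q - p) / ((p + 1) * (q - 1)) := by
    have e1 : t ^ β = (p - 1) ^ β * (q + 1) ^ β / ((p + 1) ^ β * (q - 1) ^ β) := by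
      rw [htdef, Real.div_rpow (by positivity) (by positivity),
        Real.mul_rpow hp1.le hqq.le, Real.mul_rpow hpp.le hq1.le]
    have e2 : (p + 1) ^ α = (p + 1) ^ β * (p + 1) := by
      rw [hαβ, Real.rpow_add hpp, Real.rpow_one]
    have e3 : (q - 1) ^ α = (q - 1) ^ β * (q - 1) := by
      rw [hαβ, Real.rpow_add hq1, Real.rpow_one]
    rw [e1, e2, e3]
    have hb1 : (0:ℝ) < (p + 1) ^ β := Real.rpow_pos_of_pos hpp _
    have hb2 : (0:ℝ) < (q - 1) ^ β := Real.rpow_pos_of_pos hq1 _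
    field_simp
  rw [hc0] at hcc
  have hkey : a ^ (p - 1) / (p + 1) - a ^ (q - 1) / (q + 1)
      = t ^ β * (q - p) / ((p + 1) * (q - 1)) := by
    rw [h1, h2, htα, htdef]
    field_simp
    ring
  refine ⟨a, ha, ?_⟩
  have hsplit : a ^ (p + 1) = a ^ (p - 1) * a ^ 2 := by
    rw [← Real.rpow_natCast a 2, ← Real.rpow_add ha]
    norm_num
    congr 1; ring
  have hsplit2 : a ^ (q + 1) = a ^ (q - 1) * a ^ 2 := by
    rw [← Real.rpow_natCast a 2, ← Real.rpow_add ha]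
    norm_num
    congr 1; ring
  rw [hsplit, hsplit2]
  have expand : -(c/2) * a ^ 2 + a ^ (p - 1) * a ^ 2 / (p + 1) - a ^ (q - 1) * a ^ 2 / (q + 1)
      = a ^ 2 * ((a ^ (p - 1) / (p + 1) - a ^ (q - 1) / (q + 1)) - c / 2) := by ring
  rw [expand, hkey]
  have hhalf : c / 2 < t ^ β * (q - p) / ((p + 1) * (q - 1)) := by
    have h2X : 2 * t ^ β * (q - p) / ((p + 1) * (q - 1))
        = 2 * (t ^ β * (q - p) / ((p + 1) * (q - 1))) := by ring
    linarith [hcc, h2X ▸ hcc]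
  have ha2 : (0:ℝ) < a ^ 2 := by positivity
  nlinarith

/-- Construction of an element of the constraint set with prescribed value `T ∈ [0,1]`. -/
lemma pohozaev_construct (σ c p q : ℝ) (hσ0 : 0 < σ) (hσ1 : σ ≤ 1)
    (hp : 1 < p) (hpq : p < q) (hc : 0 < c)
    (hcc : c < 2 * (q - p) * (p - 1) ^ ((p - 1) / (q - p)) * (q + 1) ^ ((p - 1) / (q - p)) /
      ((p + 1) ^ ((q - 1) / (q - p)) * (q - 1) ^ ((q - 1) / (q - p))))
    (T : ℝ) (hT0 : 0 ≤ T) (hT1 : T ≤ 1) :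
    ∃ v : ℝ → ℝ, MemHhalf σ v ∧ Nontriv v ∧ Pc c p q v = T := by
  have hpp : (0:ℝ) < p + 1 := by linarith
  have hqq : (0:ℝ) < q + 1 := by linarith
  have hp1 : (0:ℝ) < p - 1 := by linarith
  obtain ⟨A, hA, hgain⟩ := exists_pos_gain p q c hp hpq hcc
  set gst : ℝ := -(c/2) * A ^ 2 + A ^ (p+1) / (p+1) - A ^ (q+1) / (q+1) with hgst
  set L : ℝ := max 1 ((2 + c * A ^ 2 + 2 * A ^ (q+1) / (q+1)) / (2 * gst)) with hLdef
  have hL1 : (1:ℝ) ≤ L := le_max_left _ _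
  have hL : (0:ℝ) < L := by linarith
  have hL2 : 2 + c * A ^ 2 + 2 * A ^ (q+1) / (q+1) ≤ 2 * L * gst := by
    have h := le_max_right 1 ((2 + c * A ^ 2 + 2 * A ^ (q+1) / (q+1)) / (2 * gst))
    rw [div_le_iff₀ (by positivity)] at h
    calc 2 + c * A ^ 2 + 2 * A ^ (q+1) / (q+1) ≤ L * (2 * gst) := hLdef ▸ h
    _ = 2 * L * gst := by ring
  clear_value gst L
  obtain ⟨hI2int, hI2low, hI2up⟩ := bumpL_sq_bounds hL
  obtain ⟨hIpint, hIplow, hIpup⟩ := bumpL_rpow_bounds hL (p+1) (by linarith)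
  obtain ⟨hIqint, hIqlow, hIqup⟩ := bumpL_rpow_bounds hL (q+1) (by linarith)
  set I2 : ℝ := ∫ x, bumpL hL x ^ 2 with hI2
  set Ip : ℝ := ∫ x, bumpL hL x ^ (p+1) with hIp
  set Iq : ℝ := ∫ x, bumpL hL x ^ (q+1) with hIq
  have hI2pos : 0 < I2 := by linarith
  have hIppos : 0 < Ip := by linarith
  have hIqpos : 0 < Iq := by linarith
  clear_value I2 Ip Iq
  set G : ℝ → ℝ := fun a =>
    -(c/2) * a ^ 2 * I2 + a ^ (p+1) / (p+1) * Ip - a ^ (q+1) / (q+1) * Iq with hG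
  clear_value G
  -- Pc of the scaled bump equals G
  have hPc : ∀ a : ℝ, 0 < a → Pc c p q (fun x => a * bumpL hL x) = G a := by
    intro a ha
    have e2 : (∫ x : ℝ, (a * bumpL hL x) ^ 2) = a ^ 2 * I2 := by
      rw [hI2]
      simp_rw [mul_pow]
      rw [integral_const_mul]
    have ep : (∫ x : ℝ, |a * bumpL hL x| ^ (p+1)) = a ^ (p+1) * Ip := by
      have : ∀ x : ℝ, |a * bumpL hL x| ^ (p+1) = a ^ (p+1) * bumpL hL x ^ (p+1) := by
        intro x
        rw [abs_mul, abs_of_pos ha, abs_of_nonneg ((bumpL hL).nonneg' x),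
          Real.mul_rpow ha.le ((bumpL hL).nonneg' x)]
      simp_rw [this]
      rw [hIp, integral_const_mul]
    have eq' : (∫ x : ℝ, |a * bumpL hL x| ^ (q+1)) = a ^ (q+1) * Iq := by
      have : ∀ x : ℝ, |a * bumpL hL x| ^ (q+1) = a ^ (q+1) * bumpL hL x ^ (q+1) := by
        intro x
        rw [abs_mul, abs_of_pos ha, abs_of_nonneg ((bumpL hL).nonneg' x),
          Real.mul_rpow ha.le ((bumpL hL).nonneg' x)]
      simp_rw [this]
      rw [hIq, integral_const_mul]
    rw [Pc, e2, ep, eq', hG]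
    ring
  -- the small endpoint
  set K : ℝ := c * I2 * (p+1) / (2 * Ip) with hK
  have hKpos : 0 < K := by positivity
  set ε : ℝ := min A (K ^ (1/(p-1))) / 2 with hε
  have hKr : 0 < K ^ (1/(p-1)) := Real.rpow_pos_of_pos hKpos _
  have hεpos : 0 < ε := by
    rw [hε]
    have := lt_min hA hKr
    linarith
  have hεA : ε ≤ A := by
    have := min_le_left A (K ^ (1/(p-1)))
    rw [hε]; linarith
  have hεK : ε ^ (p-1) < K := by
    have hlt : ε < K ^ (1/(p-1)) := by
      have := min_le_right A (K ^ (1/(p-1)))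
      rw [hε]; linarith
    have h := Real.rpow_lt_rpow hεpos.le hlt hp1
    rwa [← Real.rpow_mul hKpos.le, one_div,
      inv_mul_cancel₀ hp1.ne', Real.rpow_one] at h
  have hGε : G ε < 0 := by
    have hsplitε : ε ^ (p + 1) = ε ^ (p - 1) * ε ^ 2 := by
      rw [← Real.rpow_natCast ε 2, ← Real.rpow_add hεpos]
      norm_num
      congr 1; ring
    have ht3 : 0 ≤ ε ^ (q+1) / (q+1) * Iq := by
      apply mul_nonneg _ hIqpos.le
      positivity
    have key : ε ^ (p-1) * Ip / (p+1) < c * I2 / 2 := by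
      have h := mul_lt_mul_of_pos_right hεK (div_pos hIppos hpp)
      have heq : K * (Ip / (p+1)) = c * I2 / 2 := by
        rw [hK]; field_simp
      calc ε ^ (p-1) * Ip / (p+1) = ε ^ (p-1) * (Ip / (p+1)) := by ring
      _ < K * (Ip / (p+1)) := h
      _ = c * I2 / 2 := heq
    have hmain : -(c/2) * ε ^ 2 * I2 + ε ^ (p+1) / (p+1) * Ip
        = ε ^ 2 * (ε ^ (p-1) * Ip / (p+1) - c * I2 / 2) := by
      rw [hsplitε]; ring
    have hneg : -(c/2) * ε ^ 2 * I2 + ε ^ (p+1) / (p+1) * Ip < 0 := by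
      rw [hmain]
      apply mul_neg_of_pos_of_neg (by positivity)
      linarith
    simp only [hG]
    linarith
  -- the large endpoint
  have hGA : 2 ≤ G A := by
    have hApp : 0 < A ^ (p+1) := Real.rpow_pos_of_pos hA _
    have hAqq : 0 < A ^ (q+1) := Real.rpow_pos_of_pos hA _
    have e1 : -(c/2) * A ^ 2 * I2 ≥ -(c/2) * A ^ 2 * (2*(L+1)) := by
      have hcA : 0 ≤ c/2 * A ^ 2 := by positivity
      nlinarith
    have e2 : A ^ (p+1) / (p+1) * Ip ≥ A ^ (p+1) / (p+1) * (2*L) := by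
      apply mul_le_mul_of_nonneg_left hIplow (by positivity)
    have e3 : -(A ^ (q+1) / (q+1) * Iq) ≥ -(A ^ (q+1) / (q+1) * (2*(L+1))) := by
      have := mul_le_mul_of_nonneg_left hIqup (by positivity : 0 ≤ A ^ (q+1) / (q+1))
      linarith
    have hsum : G A ≥ 2 * L * gst - (c * A ^ 2 + 2 * A ^ (q+1) / (q+1)) := by
      simp only [hG]
      have expand : -(c/2) * A ^ 2 * (2*(L+1)) + A ^ (p+1) / (p+1) * (2*L)
          - A ^ (q+1) / (q+1) * (2*(L+1))
          = 2 * L * gst - (c * A ^ 2 + 2 * A ^ (q+1) / (q+1)) := by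
        rw [hgst]; ring
      linarith
    linarith
  -- continuity of G
  have hGcont : ContinuousOn G (Set.Icc ε A) := by
    apply Continuous.continuousOn
    simp only [hG]
    apply Continuous.sub
    apply Continuous.add
    · exact ((continuous_const.mul (continuous_pow 2)).mul continuous_const)
    · exact ((continuous_id.rpow_const fun x => Or.inr (by positivity)).div_const _).mul
        continuous_const
    · exact ((continuous_id.rpow_const fun x => Or.inr (by positivity)).div_const _).mul
        continuous_const
  -- intermediate value theorem
  have hmem : T ∈ Set.Icc (G ε) (G A) := ⟨by linarith, by linarith⟩
  obtain ⟨a, haI, haG⟩ := intermediate_value_Icc hεA hGcont hmem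
  have hapos : 0 < a := lt_of_lt_of_le hεpos haI.1
  refine ⟨fun x => a * bumpL hL x, ?_, ?_, ?_⟩
  · apply memHhalf_of_smooth_compact σ hσ0 hσ1
    · exact contDiff_const.mul (bumpL hL).contDiff
    · exact ((bumpL hL).hasCompactSupport).mul_left
  · intro hcontra
    have hzero : ∫ x in Set.Icc (-L) L, a * bumpL hL x = 0 := by
      apply integral_eq_zero_of_ae
      exact ae_restrict_of_ae hcontra
    have hval : ∫ x in Set.Icc (-L) L, a * bumpL hL x = 2 * L * a := by
      rw [setIntegral_congr_fun measurableSet_Icc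
        (fun x hx => by rw [bumpL_plat hL hx, mul_one])]
      rw [setIntegral_const, Real.volume_real_Icc_of_le (by linarith),
        smul_eq_mul]
      ring
    have : 0 < 2 * L * a := by positivity
    rw [hval] at hzero
    linarith
  · rw [hPc a hapos, haG]

theorem pohozaev_set_nonempty
    (σ c p q : ℝ) (hσ0 : 0 < σ) (hσ1 : σ ≤ 1)
    (hp : 1 < p) (hpq : p < q) (hq : σ < 1 → q < 2 / (1 - σ) - 1)
    (hc : 0 < c)
    (hcc : c < 2 * (q - p) * (p - 1) ^ ((p - 1) / (q - p)) * (q + 1) ^ ((p - 1) / (q - p)) /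
      ((p + 1) ^ ((q - 1) / (q - p)) * (q - 1) ^ ((q - 1) / (q - p)))) :
    (σ = 1 → ∃ v : ℝ → ℝ, MemHhalf σ v ∧ Nontriv v ∧ Pc c p q v = 0) ∧
    (σ < 1 → ∃ v : ℝ → ℝ, MemHhalf σ v ∧ Nontriv v ∧ Pc c p q v = 1) := by
  obtain ⟨v0, hv0, hnt0, hPc0⟩ := pohozaev_construct σ c p q hσ0 hσ1 hp hpq hc hcc 0
    le_rfl zero_le_one
  obtain ⟨v1, hv1, hnt1, hPc1⟩ := pohozaev_construct σ c p q hσ0 hσ1 hp hpq hc hcc 1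
    zero_le_one le_rfl
  exact ⟨fun _ => ⟨v0, hv0, hnt0, hPc0⟩, fun _ => ⟨v1, hv1, hnt1, hPc1⟩⟩
end
end
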